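/- Let L > 0 and κ : R → R be smooth and L-periodic. Consider the system on (0, L) with periodic boundary conditions: u'''' − 2(κ²u')' − (κw)'' − 2(κw')' = 0 and −2w'' + κ²w − κu'' − 2(κu')' = 0. If γ : [0, L] → R² is a smooth closed curve parametrized by arc length with curvature κ (with respect to the outward normal ν), then the pairs (u, w) = (1, 0) and (u, w) = (x_i ∘ γ, −ν_i) for i = 1, 2 solve the system, where x_i is the i-th coordinate function and ν_i the i-th component of the outward unit normal along γ. -/

import Mathlib

/-- `(u, w)` solves the limiting system
`u'''' − 2(κ²u')' − (κw)'' − 2(κw')' = 0`, `−2w'' + κ²w − κu'' − 2(κu')' = 0`. -/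
def SolvesZeroSystem (κ u w : ℝ → ℝ) : Prop :=
  ∀ s : ℝ,
    (iteratedDeriv 4 u s - 2 * deriv (fun t => (κ t) ^ 2 * deriv u t) s
      - iteratedDeriv 2 (fun t => κ t * w t) s
      - 2 * deriv (fun t => κ t * deriv w t) s = 0) ∧
    (-2 * iteratedDeriv 2 w s + (κ s) ^ 2 * w s - κ s * iteratedDeriv 2 u s
      - 2 * deriv (fun t => κ t * deriv u t) s = 0)

/-- For a smooth closed arc-length parametrized curve `γ` with curvature `κ` and outward
normal `ν` (Frenet equations `γ'' = −κν`, `ν' = κγ'`), the pairs `(1, 0)` and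
`(γᵢ, −νᵢ)`, `i = 1, 2`, solve the zero-eigenvalue limiting system. -/
theorem zero_eigenspace_of_limit_system (L : ℝ) (hL : 0 < L)
    (κ : ℝ → ℝ) (γ ν : ℝ → Fin 2 → ℝ)
    (hκ : ContDiff ℝ (⊤ : ℕ∞) κ) (hκper : Function.Periodic κ L)
    (hγ : ∀ i, ContDiff ℝ (⊤ : ℕ∞) fun s => γ s i)
    (hν : ∀ i, ContDiff ℝ (⊤ : ℕ∞) fun s => ν s i)
    (hγper : Function.Periodic γ L)
    (hunit : ∀ s, (deriv (fun t => γ t 0) s) ^ 2 + (deriv (fun t => γ t 1) s) ^ 2 = 1)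
    (hFrenet1 : ∀ i s, deriv (deriv fun t => γ t i) s = -(κ s) * ν s i)
    (hFrenet2 : ∀ i s, deriv (fun t => ν t i) s = κ s * deriv (fun t => γ t i) s) :
    SolvesZeroSystem κ (fun _ => 1) (fun _ => 0) ∧
      ∀ i : Fin 2, SolvesZeroSystem κ (fun s => γ s i) (fun s => -(ν s i)) := by
  constructor
  · intro s
    constructor
    · simp [iteratedDeriv_succ, iteratedDeriv_zero]
    · simp [iteratedDeriv_succ, iteratedDeriv_zero]
  · intro i s
    -- key function identities
    have hg2 : (deriv (deriv fun t => γ t i)) = fun t => -(κ t * ν t i) := by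
      funext t; rw [hFrenet1 i t]; ring
    have hwfun : (fun t => κ t * -(ν t i)) = fun t => -(κ t * ν t i) := by
      funext t; ring
    have hwd : (fun t => κ t * deriv (fun s => -(ν s i)) t)
        = fun t => -(κ t ^ 2 * deriv (fun s => γ s i) t) := by
      funext t; rw [deriv.fun_neg, hFrenet2 i t]; ring
    have hiw : (fun t => -(ν t i)) = fun t => -(ν t i) := rfl
    constructor
    · have e1 : iteratedDeriv 4 (fun s => γ s i) s
          = iteratedDeriv 2 (fun t => κ t * -(ν t i)) s := by
        rw [show (4 : ℕ) = 2 + 2 from rfl, iteratedDeriv_succ, iteratedDeriv_succ,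
          show (2 : ℕ) = 1 + 1 from rfl, iteratedDeriv_succ, iteratedDeriv_one,
          hg2, hwfun, iteratedDeriv_succ, iteratedDeriv_one]
      have e2 : deriv (fun t => κ t * deriv (fun s => -(ν s i)) t) s
          = -(deriv (fun t => κ t ^ 2 * deriv (fun s => γ s i) t) s) := by
        rw [hwd]
        exact deriv.fun_neg
      rw [e1, e2]; ring
    · have e3 : iteratedDeriv 2 (fun s => -(ν s i)) s
          = -(deriv (fun t => κ t * deriv (fun s => γ s i) t) s) := by
        rw [show (2 : ℕ) = 1 + 1 from rfl, iteratedDeriv_succ, iteratedDeriv_one,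
          deriv.fun_neg']
        have : (fun t => -deriv (fun s => ν s i) t)
            = fun t => -(κ t * deriv (fun s => γ s i) t) := by
          funext t; rw [hFrenet2 i t]
        rw [this]
        exact deriv.fun_neg
      have e4 : iteratedDeriv 2 (fun s => γ s i) s = -(κ s * ν s i) := by
        rw [show (2 : ℕ) = 1 + 1 from rfl, iteratedDeriv_succ, iteratedDeriv_one, hg2]
      rw [e3, e4]; ring
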